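/- Let (G, p) be a finite critical net in ℝ^k satisfying the balance condition. Suppose c ∈ EuclideanSpace ℝ (Fin k) and r ≥ 0 are such that ‖p x − c‖ ≤ r for every interior vertex x. Then the interior length satisfies L ≤ r · |∂X|. -/
import Mathlib


open scoped RealInnerProductSpace

/-- In a finite critical net in `ℝ^k` satisfying the balance condition,
if all interior vertices lie in the ball of radius `r` around `c`, then the interior
length (the sum of `‖p x - p y‖` over the unordered edges with both endpoints interior,
written here as half the sum over ordered pairs) is at most `r · |∂X|`. -/
theorem interior_length_le_radius_mul_card_leaves
    {k : ℕ} (hk : 1 ≤ k) {V : Type*} [Fintype V] [DecidableEq V]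
    (G : SimpleGraph V) [DecidableRel G.Adj]
    (p : V → EuclideanSpace ℝ (Fin k)) (hinj : Function.Injective p)
    (hdeg1 : ∀ x : V, 1 ≤ G.degree x)
    (hnoLL : ∀ x y : V, G.Adj x y → ¬(G.degree x = 1 ∧ G.degree y = 1))
    (hbal : ∀ x : V, 2 ≤ G.degree x →
      ∑ y ∈ G.neighborFinset x, (‖p x - p y‖)⁻¹ • (p x - p y) = 0)
    (c : EuclideanSpace ℝ (Fin k)) (r : ℝ) (hr : 0 ≤ r)
    (hball : ∀ x : V, 2 ≤ G.degree x → ‖p x - c‖ ≤ r) :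
    (1 / 2 : ℝ) *
        ∑ x ∈ Finset.univ.filter (fun x : V => 2 ≤ G.degree x),
          ∑ y ∈ (G.neighborFinset x).filter (fun y => 2 ≤ G.degree y), ‖p x - p y‖
      ≤ r * (Finset.univ.filter fun l : V => G.degree l = 1).card := by
  classical
  set f : V → V → ℝ := fun x y => ⟪(‖p x - p y‖)⁻¹ • (p x - p y), p x - c⟫ with hf
  have hnorm : ∀ {x y : V}, G.Adj x y → ‖p x - p y‖ ≠ 0 := by
    intro x y h
    simp only [ne_eq, norm_eq_zero, sub_eq_zero]
    exact fun he => G.ne_of_adj h (hinj he)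
  -- key pointwise identities
  have fadd : ∀ {x y : V}, G.Adj x y → f x y + f y x = ‖p x - p y‖ := by
    intro x y h
    have h0 := hnorm h
    simp only [hf, real_inner_smul_left]
    rw [norm_sub_rev (p y) (p x)]
    have h1 : ⟪p y - p x, p y - c⟫ = -⟪p x - p y, p y - c⟫ := by
      rw [← neg_sub (p x) (p y), inner_neg_left]
    rw [h1]
    have h2 : ⟪p x - p y, p x - c⟫ - ⟪p x - p y, p y - c⟫ = ‖p x - p y‖ * ‖p x - p y‖ := by
      rw [← inner_sub_right, sub_sub_sub_cancel_right, real_inner_self_eq_norm_mul_norm]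
    have h3 : ⟪p x - p y, p x - c⟫ + -⟪p x - p y, p y - c⟫
        = ‖p x - p y‖ * ‖p x - p y‖ := by linarith
    rw [← mul_add, h3, inv_mul_cancel_left₀ h0]
  have fbound : ∀ {x y : V}, G.Adj x y → ‖p x - c‖ ≤ r → -r ≤ f x y := by
    intro x y h hx
    have h0 := hnorm h
    have habs : |f x y| ≤ ‖p x - c‖ := by
      have := abs_real_inner_le_norm ((‖p x - p y‖)⁻¹ • (p x - p y)) (p x - c)
      have hn1 : ‖(‖p x - p y‖)⁻¹ • (p x - p y)‖ = 1 := by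
        rw [norm_smul, norm_inv, norm_norm, inv_mul_cancel₀ h0]
      rw [hn1, one_mul] at this
      exact this
    have := neg_abs_le (f x y)
    linarith [habs.trans hx]
  -- conversion of the filtered double sums to if-sums over all of V × V
  have conv1 : ∀ (q : V → Prop) [DecidablePred q] (g : V → V → ℝ),
      (∑ x ∈ Finset.univ.filter (fun x : V => 2 ≤ G.degree x),
        ∑ y ∈ (G.neighborFinset x).filter q, g x y)
      = ∑ x : V, ∑ y : V,
          (if 2 ≤ G.degree x ∧ G.Adj x y ∧ q y then g x y else 0) := by
    intro q _ g
    rw [Finset.sum_filter]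
    refine Finset.sum_congr rfl fun x _ => ?_
    by_cases hx : 2 ≤ G.degree x
    · simp only [hx, if_true, true_and]
      rw [SimpleGraph.neighborFinset_eq_filter, Finset.filter_filter, Finset.sum_filter]
    · simp [hx]
  -- step 1+2 : A + B = 0
  have hzero : (∑ x ∈ Finset.univ.filter (fun x : V => 2 ≤ G.degree x),
        ∑ y ∈ (G.neighborFinset x).filter (fun y => 2 ≤ G.degree y), f x y)
      + (∑ x ∈ Finset.univ.filter (fun x : V => 2 ≤ G.degree x),
        ∑ y ∈ (G.neighborFinset x).filter (fun y => ¬ 2 ≤ G.degree y), f x y) = 0 := by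
    rw [← Finset.sum_add_distrib]
    refine Finset.sum_eq_zero fun x hx => ?_
    rw [Finset.sum_filter_add_sum_filter_not]
    have hx2 : 2 ≤ G.degree x := (Finset.mem_filter.mp hx).2
    have : (∑ y ∈ G.neighborFinset x, f x y)
        = ⟪∑ y ∈ G.neighborFinset x, (‖p x - p y‖)⁻¹ • (p x - p y), p x - c⟫ := by
      rw [sum_inner]
    rw [this, hbal x hx2, inner_zero_left]
  -- step 3 : A = (1/2) * LHS
  have hA : (∑ x ∈ Finset.univ.filter (fun x : V => 2 ≤ G.degree x),
        ∑ y ∈ (G.neighborFinset x).filter (fun y => 2 ≤ G.degree y), f x y)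
      = (1 / 2 : ℝ) *
        ∑ x ∈ Finset.univ.filter (fun x : V => 2 ≤ G.degree x),
          ∑ y ∈ (G.neighborFinset x).filter (fun y => 2 ≤ G.degree y), ‖p x - p y‖ := by
    have hswap : (∑ x : V, ∑ y : V,
          (if 2 ≤ G.degree x ∧ G.Adj x y ∧ 2 ≤ G.degree y then f x y else 0))
        = ∑ x : V, ∑ y : V,
          (if 2 ≤ G.degree x ∧ G.Adj x y ∧ 2 ≤ G.degree y then f y x else 0) := by
      rw [Finset.sum_comm]
      refine Finset.sum_congr rfl fun x _ => Finset.sum_congr rfl fun y _ => ?_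
      have : (2 ≤ G.degree y ∧ G.Adj y x ∧ 2 ≤ G.degree x)
          ↔ (2 ≤ G.degree x ∧ G.Adj x y ∧ 2 ≤ G.degree y) := by
        constructor
        · rintro ⟨a, b, d⟩; exact ⟨d, b.symm, a⟩
        · rintro ⟨a, b, d⟩; exact ⟨d, b.symm, a⟩
      simp only [this]
    rw [conv1, conv1]
    have h2 : (2 : ℝ) * (∑ x : V, ∑ y : V,
          (if 2 ≤ G.degree x ∧ G.Adj x y ∧ 2 ≤ G.degree y then f x y else 0))
        = ∑ x : V, ∑ y : V,
          (if 2 ≤ G.degree x ∧ G.Adj x y ∧ 2 ≤ G.degree y then ‖p x - p y‖ else 0) := by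
      rw [two_mul]
      nth_rewrite 2 [hswap]
      rw [← Finset.sum_add_distrib]
      refine Finset.sum_congr rfl fun x _ => ?_
      rw [← Finset.sum_add_distrib]
      refine Finset.sum_congr rfl fun y _ => ?_
      by_cases hcond : 2 ≤ G.degree x ∧ G.Adj x y ∧ 2 ≤ G.degree y
      · simp only [hcond, if_true]
        exact fadd hcond.2.1
      · simp [hcond]
    linarith
  -- counting : the number of (interior, leaf) adjacent pairs is the number of leaves
  have hcount : (∑ x ∈ Finset.univ.filter (fun x : V => 2 ≤ G.degree x),
        ((G.neighborFinset x).filter (fun y => ¬ 2 ≤ G.degree y)).card : ℝ)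
      = (Finset.univ.filter fun l : V => G.degree l = 1).card := by
    push_cast
    have hc := conv1 (fun y => ¬ 2 ≤ G.degree y) (fun _ _ => (1 : ℝ))
    simp only [Finset.sum_const, nsmul_eq_mul, mul_one] at hc
    rw [hc, Finset.sum_comm, ← Finset.sum_boole]
    refine Finset.sum_congr rfl fun y _ => ?_
    by_cases hy : G.degree y = 1
    · rw [if_pos hy]
      have hleaf : ∀ x : V, (2 ≤ G.degree x ∧ G.Adj x y ∧ ¬ 2 ≤ G.degree y) ↔ G.Adj y x := by
        intro x
        constructor
        · rintro ⟨_, b, _⟩; exact b.symm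
        · intro b
          have hx1 : G.degree x ≠ 1 := fun h1 => hnoLL y x b ⟨hy, h1⟩
          have hx2 := hdeg1 x
          exact ⟨by omega, b.symm, by omega⟩
      simp only [hleaf]
      rw [Finset.sum_boole]
      have hcard : (Finset.univ.filter (fun x => G.Adj y x)).card = G.degree y := by
        rw [← SimpleGraph.card_neighborFinset_eq_degree, SimpleGraph.neighborFinset_eq_filter]
      rw [hcard, hy]
      norm_num
    · have hy2 : 2 ≤ G.degree y := by have := hdeg1 y; omega
      simp [hy, hy2]
  -- step 4 : bound B from below
  have hB : -(r * (Finset.univ.filter fun l : V => G.degree l = 1).card)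
      ≤ ∑ x ∈ Finset.univ.filter (fun x : V => 2 ≤ G.degree x),
        ∑ y ∈ (G.neighborFinset x).filter (fun y => ¬ 2 ≤ G.degree y), f x y := by
    have : ∑ x ∈ Finset.univ.filter (fun x : V => 2 ≤ G.degree x),
        ∑ y ∈ (G.neighborFinset x).filter (fun y => ¬ 2 ≤ G.degree y), (-r)
        ≤ ∑ x ∈ Finset.univ.filter (fun x : V => 2 ≤ G.degree x),
        ∑ y ∈ (G.neighborFinset x).filter (fun y => ¬ 2 ≤ G.degree y), f x y := by
      refine Finset.sum_le_sum fun x hx => Finset.sum_le_sum fun y hy => ?_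
      have hx2 : 2 ≤ G.degree x := (Finset.mem_filter.mp hx).2
      have hadj : G.Adj x y := by
        have := (Finset.mem_filter.mp hy).1
        exact (SimpleGraph.mem_neighborFinset G x y).mp this
      exact fbound hadj (hball x hx2)
    refine le_trans ?_ this
    simp only [Finset.sum_const, nsmul_eq_mul]
    rw [← Finset.sum_mul, hcount]
    have heq : ((Finset.univ.filter fun l : V => G.degree l = 1).card : ℝ) * (-r)
        = -(r * (Finset.univ.filter fun l : V => G.degree l = 1).card) := by ring
    rw [heq]
  linarith [hA, hB, hzero]
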